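/- For every genotype matrix A with columns 1, …, m, every row g of A that contains at least one 2-entry belongs to the set A_i for exactly one column i; rows without a 2-entry belong to no set A_i. -/
import Mathlib


/-- A pair of haplotypes `h`, `h'` explains a genotype `g`:
entries `0`/`1` are copied, and at `2`-entries the haplotypes differ. -/
def ExplainsRow {m : ℕ} (h h' : Fin m → Bool) (g : Fin m → Fin 3) : Prop :=
  ∀ j : Fin m,
    (g j = 0 → h j = false ∧ h' j = false) ∧
    (g j = 1 → h j = true ∧ h' j = true) ∧
    (g j = 2 → h j ≠ h' j)

/-- A `2n × m` haplotype matrix, given by its odd rows `B₁` and even rows `B₂`,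
explains an `n × m` genotype matrix `A`. -/
def Explains {n m : ℕ} (B₁ B₂ : Fin n → Fin m → Bool) (A : Fin n → Fin m → Fin 3) : Prop :=
  ∀ r : Fin n, ExplainsRow (B₁ r) (B₂ r) (A r)

/-- The induced set `ind^B(i,j)` of a haplotype matrix: all pairs `xy` appearing
in columns `i` and `j` in some row of `B`. -/
def indB {n m : ℕ} (B₁ B₂ : Fin n → Fin m → Bool) (i j : Fin m) : Set (Bool × Bool) :=
  {p | ∃ r : Fin n, (B₁ r i = p.1 ∧ B₁ r j = p.2) ∨ (B₂ r i = p.1 ∧ B₂ r j = p.2)}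

/-- The three gamete property: `{01,10,11}` is never a subset of an induced set. -/
def ThreeGamete {n m : ℕ} (B₁ B₂ : Fin n → Fin m → Bool) : Prop :=
  ∀ i j : Fin m,
    ¬ (({(false, true), (true, false), (true, true)} : Set (Bool × Bool)) ⊆ indB B₁ B₂ i j)

/-- The four gamete property: no induced set equals `{00,01,10,11}`. -/
def FourGamete {n m : ℕ} (B₁ B₂ : Fin n → Fin m → Bool) : Prop :=
  ∀ i j : Fin m,
    indB B₁ B₂ i j ≠
      ({(false, false), (false, true), (true, false), (true, true)} : Set (Bool × Bool))

/-- A genotype matrix admits a directed perfect phylogeny if some explaining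
haplotype matrix satisfies the three gamete property. -/
def AdmitsDirectedPP {n m : ℕ} (A : Fin n → Fin m → Fin 3) : Prop :=
  ∃ B₁ B₂ : Fin n → Fin m → Bool, Explains B₁ B₂ A ∧ ThreeGamete B₁ B₂

/-- A genotype matrix admits a perfect phylogeny if some explaining
haplotype matrix satisfies the four gamete property. -/
def AdmitsPP {n m : ℕ} (A : Fin n → Fin m → Fin 3) : Prop :=
  ∃ B₁ B₂ : Fin n → Fin m → Bool, Explains B₁ B₂ A ∧ FourGamete B₁ B₂

/-- Encode a haplotype entry as a genotype entry. -/
def boolToFin3 (b : Bool) : Fin 3 := if b then 1 else 0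

/-- The induced set `ind^A(i,j)` of a genotype matrix. -/
def indA {n m : ℕ} (A : Fin n → Fin m → Fin 3) (i j : Fin m) : Set (Bool × Bool) :=
  {p | ∃ r : Fin n,
    (A r i = boolToFin3 p.1 ∧ A r j = boolToFin3 p.2) ∨
    (A r i = boolToFin3 p.1 ∧ A r j = 2) ∨
    (A r i = 2 ∧ A r j = boolToFin3 p.2)}

/-- Column `i` of `A` is greater than column `j` (written `i ≻^A j`):
`ind^A(i,j) ⊆ {00,10,11}` and the two columns are not identical. -/
def ColGreater {n m : ℕ} (A : Fin n → Fin m → Fin 3) (i j : Fin m) : Prop :=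
  indA A i j ⊆ ({(false, false), (true, false), (true, true)} : Set (Bool × Bool)) ∧
  ∃ r : Fin n, A r i ≠ A r j

/-- The set `A_i`: rows `g` of `A` with `g[i] = 2` such that `i` is `≻^A`-maximal
among the `2`-columns of `g` and has the least index among all such maximal columns. -/
def rowSet {n m : ℕ} (A : Fin n → Fin m → Fin 3) (i : Fin m) : Set (Fin n) :=
  {r | A r i = 2 ∧
    (∀ j : Fin m, j ≠ i → A r j = 2 → ¬ ColGreater A j i) ∧
    (∀ j : Fin m, j ≠ i →
      (A r j = 2 ∧ ∀ k : Fin m, k ≠ j → A r k = 2 → ¬ ColGreater A k j) → i < j)}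

section Aux

private lemma fin3_cases (x : Fin 3) : x = 0 ∨ x = 1 ∨ x = 2 := by omega

private lemma indA_swap {n m : ℕ} {A : Fin n → Fin m → Fin 3} {i j : Fin m}
    {p : Bool × Bool} (h : p ∈ indA A i j) : (p.2, p.1) ∈ indA A j i := by
  obtain ⟨r, hr⟩ := h
  exact ⟨r, by tauto⟩

private lemma subset_iff_ft {n m : ℕ} {A : Fin n → Fin m → Fin 3} {i j : Fin m} :
    indA A i j ⊆ ({(false, false), (true, false), (true, true)} : Set (Bool × Bool)) ↔
      (false, true) ∉ indA A i j := by
  constructor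
  · intro h hm
    have := h hm
    simp at this
  · intro h p hp
    rcases p with ⟨x, y⟩
    rcases x <;> rcases y <;> simp_all

private lemma mem_ft_or_tf {n m : ℕ} {A : Fin n → Fin m → Fin 3} {i j : Fin m}
    {r : Fin n} (h : A r i ≠ A r j) :
    (false, true) ∈ indA A i j ∨ (true, false) ∈ indA A i j := by
  rcases fin3_cases (A r i) with hi | hi | hi <;>
    rcases fin3_cases (A r j) with hj | hj | hj
  · exact absurd (hi.trans hj.symm) h
  · exact Or.inl ⟨r, Or.inl ⟨hi, hj⟩⟩
  · exact Or.inl ⟨r, Or.inr (Or.inl ⟨hi, hj⟩)⟩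
  · exact Or.inr ⟨r, Or.inl ⟨hi, hj⟩⟩
  · exact absurd (hi.trans hj.symm) h
  · exact Or.inr ⟨r, Or.inr (Or.inl ⟨hi, hj⟩)⟩
  · exact Or.inr ⟨r, Or.inr (Or.inr ⟨hi, hj⟩)⟩
  · exact Or.inl ⟨r, Or.inr (Or.inr ⟨hi, hj⟩)⟩
  · exact absurd (hi.trans hj.symm) h

private lemma colGreater_asymm {n m : ℕ} {A : Fin n → Fin m → Fin 3} {i j : Fin m}
    (h1 : ColGreater A i j) (h2 : ColGreater A j i) : False := by
  obtain ⟨r, hr⟩ := h1.2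
  have hft := subset_iff_ft.mp h1.1
  have hft' := subset_iff_ft.mp h2.1
  rcases mem_ft_or_tf hr with h | h
  · exact hft h
  · exact hft' (indA_swap h)

private lemma colGreater_trans {n m : ℕ} {A : Fin n → Fin m → Fin 3} {i j k : Fin m}
    (h1 : ColGreater A i j) (h2 : ColGreater A j k) : ColGreater A i k := by
  have hij := subset_iff_ft.mp h1.1
  have hjk := subset_iff_ft.mp h2.1
  constructor
  · rw [subset_iff_ft]
    rintro ⟨r, hr⟩
    rcases fin3_cases (A r j) with hj | hj | hj
    · -- A r j = 0 : derive (false,true) ∈ indA A j k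
      apply hjk
      refine ⟨r, ?_⟩
      simp only [boolToFin3] at hr ⊢
      rcases hr with ⟨h1', h2'⟩ | ⟨h1', h2'⟩ | ⟨h1', h2'⟩ <;> simp_all <;> tauto
    · -- A r j = 1 : derive (false,true) ∈ indA A i j
      apply hij
      refine ⟨r, ?_⟩
      simp only [boolToFin3] at hr ⊢
      rcases hr with ⟨h1', h2'⟩ | ⟨h1', h2'⟩ | ⟨h1', h2'⟩ <;> simp_all <;> tauto
    · -- A r j = 2 : first disjunct of hr splits
      rcases hr with ⟨h1', h2'⟩ | ⟨h1', h2'⟩ | ⟨h1', h2'⟩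
      · exact hij ⟨r, Or.inr (Or.inl ⟨h1', hj⟩)⟩
      · exact hij ⟨r, Or.inr (Or.inl ⟨h1', hj⟩)⟩
      · exact hjk ⟨r, Or.inr (Or.inr ⟨hj, h2'⟩)⟩
  · by_contra h
    push_neg at h
    obtain ⟨r, hr⟩ := h2.2
    have hji : ColGreater A j i := by
      constructor
      · intro p hp
        apply h2.1
        obtain ⟨s, hs⟩ := hp
        exact ⟨s, by rw [← h s]; exact hs⟩
      · exact ⟨r, by rw [← h r] at hr; exact hr⟩
    exact colGreater_asymm h1 hji

end Aux

/-- Every row of a genotype matrix `A` that contains at least one `2`-entry belongs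
to the set `A_i` for exactly one column `i`; rows without a `2`-entry belong to no
set `A_i`. -/
theorem rowSet_partition {n m : ℕ} (A : Fin n → Fin m → Fin 3) (r : Fin n) :
    ((∃ j : Fin m, A r j = 2) → ∃! i : Fin m, r ∈ rowSet A i) ∧
    ((¬ ∃ j : Fin m, A r j = 2) → ∀ i : Fin m, r ∉ rowSet A i) := by
  classical
  haveI : IsTrans (Fin m) (ColGreater A) := ⟨fun _ _ _ => colGreater_trans⟩
  haveI : IsIrrefl (Fin m) (ColGreater A) := ⟨fun _ h => colGreater_asymm h h⟩
  constructor
  · rintro ⟨j0, hj0⟩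
    have hwf := Finite.wellFounded_of_trans_of_irrefl (α := Fin m) (ColGreater A)
    obtain ⟨j1, hj1mem, hj1max⟩ := hwf.has_min {j | A r j = 2} ⟨j0, hj0⟩
    let T : Finset (Fin m) :=
      Finset.univ.filter (fun j => A r j = 2 ∧ ∀ k, A r k = 2 → ¬ ColGreater A k j)
    have hT : T.Nonempty := ⟨j1, by
      simp only [T, Finset.mem_filter, Finset.mem_univ, true_and]
      exact ⟨hj1mem, fun k hk => hj1max k hk⟩⟩
    set i := T.min' hT with hi_def
    have himem := T.min'_mem hT
    simp only [T, Finset.mem_filter, Finset.mem_univ, true_and] at himem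
    have hmemT : r ∈ rowSet A i := by
      refine ⟨himem.1, fun j _ hj2 => himem.2 j hj2, fun j hji hj => ?_⟩
      have hjT : j ∈ T := by
        simp only [T, Finset.mem_filter, Finset.mem_univ, true_and]
        refine ⟨hj.1, fun k hk => ?_⟩
        by_cases hkj : k = j
        · subst hkj; exact fun h => colGreater_asymm h h
        · exact hj.2 k hkj hk
      exact lt_of_le_of_ne (T.min'_le j hjT) (fun h => hji h.symm)
    refine ⟨i, hmemT, fun i' hi' => ?_⟩
    by_contra hne
    have hi'T : i' ∈ T := by
      simp only [T, Finset.mem_filter, Finset.mem_univ, true_and]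
      refine ⟨hi'.1, fun k hk => ?_⟩
      by_cases hki : k = i'
      · subst hki; exact fun h => colGreater_asymm h h
      · exact hi'.2.1 k hki hk
    have h1 : i' < i := hi'.2.2 i (fun h => hne h.symm)
      ⟨himem.1, fun k hki hk => himem.2 k hk⟩
    exact absurd (T.min'_le i' hi'T) (not_le.mpr h1)
  · intro h i hi
    exact h ⟨i, hi.1⟩
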